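/- For every ε ∈ (0, 1/8) and α > 0, there exists C_ε such that for all r > 1: ∫₀^∞ t^{−3/2}(r + t) exp(−r²/(4t) − α²t + εr/t) dt ≤ C_ε e^{−αr}. -/

import Mathlib

open MeasureTheory Set

lemma aux_exp_neg_le {x : ℝ} (hx : 0 < x) : Real.exp (-x) ≤ 4 / x ^ 2 := by
  have h1 : x / 2 ≤ Real.exp (x / 2) := by
    have := Real.add_one_le_exp (x / 2); linarith
  have h2 : x ^ 2 / 4 ≤ Real.exp x := by
    have hm := mul_le_mul h1 h1 (by linarith) (Real.exp_nonneg _)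
    rw [← Real.exp_add] at hm
    have hxx : x / 2 + x / 2 = x := by ring
    rw [hxx] at hm
    nlinarith
  rw [Real.exp_neg]
  have hx2 : (0:ℝ) < x ^ 2 / 4 := by positivity
  calc (Real.exp x)⁻¹ ≤ (x ^ 2 / 4)⁻¹ := by
        exact inv_anti₀ hx2 h2
    _ = 4 / x ^ 2 := by field_simp

lemma aux_rpow_half_le {t : ℝ} (ht : 0 < t) : t ^ ((1:ℝ)/2) ≤ t + 1 := by
  rcases le_total t 1 with h | h
  · have := Real.rpow_le_one ht.le h (by norm_num : (0:ℝ) ≤ 1/2)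
    linarith
  · have h2 : t ^ ((1:ℝ)/2) ≤ t ^ (1:ℝ) :=
      Real.rpow_le_rpow_of_exponent_le h (by norm_num)
    rw [Real.rpow_one] at h2; linarith

lemma piece1 (ε α r : ℝ) (hε₀ : 0 < ε) (hε₁ : ε < 1 / 8) (hα : 0 < α) (hr : 1 < r) :
    ∫⁻ t in Ioc (0:ℝ) (r/(8*α)),
        ENNReal.ofReal (t ^ (-(3:ℝ)/2) * (r + t) *
          Real.exp (-r ^ 2 / (4 * t) - α ^ 2 * t + ε * r / t)) ≤
      ENNReal.ofReal ((16384 * (1 + 1/(8*α))^2 / (8*α)) * Real.exp (-α * r)) := by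
  have hr0 : (0:ℝ) < r := by linarith
  set a : ℝ := r / (8*α) with ha_def
  have ha0 : 0 < a := by positivity
  -- pointwise bound by a constant
  have hpt : ∀ t ∈ Ioc (0:ℝ) a,
      ENNReal.ofReal (t ^ (-(3:ℝ)/2) * (r + t) *
          Real.exp (-r ^ 2 / (4 * t) - α ^ 2 * t + ε * r / t)) ≤
      ENNReal.ofReal (Real.exp (-α * r) * (16384 / r^4 * ((a+1) * (r+a)))) := by
    intro t ht
    obtain ⟨ht0, hta⟩ := ht
    apply ENNReal.ofReal_le_ofReal
    have h8at : 8 * α * t ≤ r := by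
      rw [ha_def] at hta
      calc 8 * α * t ≤ 8 * α * (r/(8*α)) := by
            have := mul_le_mul_of_nonneg_left hta (by positivity : (0:ℝ) ≤ 8*α)
            linarith
        _ = r := by field_simp
    -- exponent bound
    have hE : -r ^ 2 / (4 * t) - α ^ 2 * t + ε * r / t ≤ -α * r + -(r^2/(64*t)) := by
      have hdiff : (-α * r + -(r^2/(64*t))) - (-r ^ 2 / (4 * t) - α ^ 2 * t + ε * r / t)
          = (15*r^2 + 64*α^2*t^2 - 64*α*r*t - 64*ε*r) / (64*t) := by
        field_simp; ring
      have hnum : 0 ≤ 15*r^2 + 64*α^2*t^2 - 64*α*r*t - 64*ε*r := by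
        nlinarith [sq_nonneg (4*r - 8*α*t), mul_pos hα ht0, sq_nonneg r]
      have : 0 ≤ (-α * r + -(r^2/(64*t))) - (-r ^ 2 / (4 * t) - α ^ 2 * t + ε * r / t) := by
        rw [hdiff]; positivity
      linarith
    have hexpE : Real.exp (-r ^ 2 / (4 * t) - α ^ 2 * t + ε * r / t)
        ≤ Real.exp (-α * r) * (16384 * t^2 / r^4) := by
      calc Real.exp (-r ^ 2 / (4 * t) - α ^ 2 * t + ε * r / t)
          ≤ Real.exp (-α * r + -(r^2/(64*t))) := Real.exp_le_exp.mpr hE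
        _ = Real.exp (-α * r) * Real.exp (-(r^2/(64*t))) := Real.exp_add _ _
        _ ≤ Real.exp (-α * r) * (16384 * t^2 / r^4) := by
            apply mul_le_mul_of_nonneg_left _ (Real.exp_nonneg _)
            have hx : (0:ℝ) < r^2/(64*t) := by positivity
            calc Real.exp (-(r^2/(64*t))) ≤ 4 / (r^2/(64*t))^2 := aux_exp_neg_le hx
              _ = 16384 * t^2 / r^4 := by
                  field_simp; ring
    have hrt0 : (0:ℝ) ≤ t ^ (-(3:ℝ)/2) * (r + t) := by
      have : (0:ℝ) ≤ t ^ (-(3:ℝ)/2) := (Real.rpow_pos_of_pos ht0 _).le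
      nlinarith
    have hpow : t ^ (-(3:ℝ)/2) * t^2 = t ^ ((1:ℝ)/2) := by
      rw [← Real.rpow_natCast t 2, ← Real.rpow_add ht0]
      norm_num
    calc t ^ (-(3:ℝ)/2) * (r + t) * Real.exp (-r ^ 2 / (4 * t) - α ^ 2 * t + ε * r / t)
        ≤ t ^ (-(3:ℝ)/2) * (r + t) * (Real.exp (-α * r) * (16384 * t^2 / r^4)) :=
          mul_le_mul_of_nonneg_left hexpE hrt0
      _ = Real.exp (-α * r) * (16384 / r^4 * ((t ^ (-(3:ℝ)/2) * t^2) * (r+t))) := by ring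
      _ = Real.exp (-α * r) * (16384 / r^4 * ((t ^ ((1:ℝ)/2)) * (r+t))) := by rw [hpow]
      _ ≤ Real.exp (-α * r) * (16384 / r^4 * ((a+1) * (r+a))) := by
          apply mul_le_mul_of_nonneg_left _ (Real.exp_nonneg _)
          apply mul_le_mul_of_nonneg_left _ (by positivity)
          apply mul_le_mul _ (by linarith) (by linarith) (by linarith)
          calc t ^ ((1:ℝ)/2) ≤ t + 1 := aux_rpow_half_le ht0
            _ ≤ a + 1 := by linarith
  calc ∫⁻ t in Ioc (0:ℝ) a,
        ENNReal.ofReal (t ^ (-(3:ℝ)/2) * (r + t) *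
          Real.exp (-r ^ 2 / (4 * t) - α ^ 2 * t + ε * r / t))
      ≤ ∫⁻ _ in Ioc (0:ℝ) a,
          ENNReal.ofReal (Real.exp (-α * r) * (16384 / r^4 * ((a+1) * (r+a)))) :=
        setLIntegral_mono measurable_const hpt
    _ = ENNReal.ofReal (Real.exp (-α * r) * (16384 / r^4 * ((a+1) * (r+a)))) * volume (Ioc (0:ℝ) a) :=
        setLIntegral_const _ _
    _ = ENNReal.ofReal (Real.exp (-α * r) * (16384 / r^4 * ((a+1) * (r+a))) * a) := by
        rw [Real.volume_Ioc, sub_zero, ← ENNReal.ofReal_mul (by positivity)]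
    _ ≤ ENNReal.ofReal ((16384 * (1 + 1/(8*α))^2 / (8*α)) * Real.exp (-α * r)) := by
        apply ENNReal.ofReal_le_ofReal
        rw [show Real.exp (-α * r) * (16384 / r^4 * ((a+1) * (r+a))) * a
            = (16384 / r^4 * ((a+1) * (r+a)) * a) * Real.exp (-α * r) by ring]
        apply mul_le_mul_of_nonneg_right _ (Real.exp_nonneg _)
        have ha1 : a + 1 ≤ (1 + 1/(8*α)) * r := by
          rw [ha_def]; rw [div_add' _ _ _ (by positivity : (8*α) ≠ 0)]
          rw [div_le_iff₀ (by positivity : (0:ℝ) < 8*α)]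
          have hexp : (1 + 1/(8*α)) * r * (8*α) = 8*α*r + r := by field_simp
          rw [hexp]
          nlinarith [mul_le_mul_of_nonneg_left hr.le (by positivity : (0:ℝ) ≤ 8*α)]
        have ha2 : r + a = (1 + 1/(8*α)) * r := by
          rw [ha_def]; field_simp
        have ha3 : a = r/(8*α) := ha_def
        calc 16384 / r^4 * ((a+1) * (r+a)) * a
            ≤ 16384 / r^4 * (((1 + 1/(8*α)) * r) * ((1 + 1/(8*α)) * r)) * (r/(8*α)) := by
              apply mul_le_mul _ (by rw [ha3]) (by positivity) (by positivity)
              apply mul_le_mul_of_nonneg_left _ (by positivity)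
              apply mul_le_mul ha1 (le_of_eq ha2) (by positivity) (by positivity)
          _ = (16384 * (1 + 1/(8*α))^2 / (8*α)) * (1/r) := by
              field_simp
          _ ≤ (16384 * (1 + 1/(8*α))^2 / (8*α)) := by
              have h1r : 1/r ≤ 1 := by rw [div_le_one hr0]; linarith
              have hK : (0:ℝ) ≤ 16384 * (1 + 1/(8*α))^2 / (8*α) := by positivity
              nlinarith

lemma piece2 (ε α r : ℝ) (hε₀ : 0 < ε) (hε₁ : ε < 1 / 8) (hα : 0 < α) (hr : 1 < r) :
    ∫⁻ t in Ioc (r/(8*α)) (r/α),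
        ENNReal.ofReal (t ^ (-(3:ℝ)/2) * (r + t) *
          Real.exp (-r ^ 2 / (4 * t) - α ^ 2 * t + ε * r / t)) ≤
      ENNReal.ofReal ((Real.exp α * ((8*α) ^ ((3:ℝ)/2) * (1 + 1/α) *
        Real.sqrt (Real.pi / α^3))) * Real.exp (-α * r)) := by
  have hr0 : (0:ℝ) < r := by linarith
  set a : ℝ := r / (8*α) with ha_def
  set b : ℝ := r / α with hb_def
  have ha0 : 0 < a := by positivity
  have hb0 : 0 < b := by positivity
  set k : ℝ := α^3 / r with hk_def
  have hk0 : 0 < k := by positivity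
  set d : ℝ := r / (2*α) with hd_def
  set M : ℝ := Real.exp (-α * r) * Real.exp α * a ^ (-(3:ℝ)/2) * (r + b) with hM_def
  have hM0 : 0 ≤ M := by positivity
  have hpt : ∀ t ∈ Ioc a b,
      ENNReal.ofReal (t ^ (-(3:ℝ)/2) * (r + t) *
          Real.exp (-r ^ 2 / (4 * t) - α ^ 2 * t + ε * r / t)) ≤
      ENNReal.ofReal (M * Real.exp (-(k * (t - d)^2))) := by
    intro t ht
    obtain ⟨hat, htb⟩ := ht
    have ht0 : 0 < t := lt_trans ha0 hat
    apply ENNReal.ofReal_le_ofReal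
    have hta : a ≤ t := hat.le
    have step1 : ε * r / t ≤ α := by
      rw [div_le_iff₀ ht0]
      have h1 : r / 8 ≤ α * t := by
        have haa : α * a = r / 8 := by rw [ha_def]; field_simp
        nlinarith [mul_le_mul_of_nonneg_left hta hα.le]
      nlinarith
    have hrat : α * t ≤ r := by
      have hbb : α * b = r := by rw [hb_def]; field_simp
      nlinarith [mul_le_mul_of_nonneg_left htb hα.le]
    have step2 : -r ^ 2 / (4 * t) - α ^ 2 * t ≤ -α * r + -(k * (t - d)^2) := by
      have hdiff : (-α * r + -(k * (t - d)^2)) - (-r ^ 2 / (4 * t) - α ^ 2 * t)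
          = (r - 2*α*t)^2 * (r - α*t) / (4*t*r) := by
        rw [hk_def, hd_def]; field_simp; ring
      have hnum : 0 ≤ (r - 2*α*t)^2 * (r - α*t) / (4*t*r) := by
        apply div_nonneg (mul_nonneg (sq_nonneg _) (by linarith)) (by positivity)
      linarith [hdiff ▸ hnum]
    have hE : -r ^ 2 / (4 * t) - α ^ 2 * t + ε * r / t
        ≤ (-α * r + α) + -(k * (t - d)^2) := by linarith
    have hexpE : Real.exp (-r ^ 2 / (4 * t) - α ^ 2 * t + ε * r / t)
        ≤ Real.exp (-α * r) * Real.exp α * Real.exp (-(k * (t - d)^2)) := by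
      calc Real.exp (-r ^ 2 / (4 * t) - α ^ 2 * t + ε * r / t)
          ≤ Real.exp ((-α * r + α) + -(k * (t - d)^2)) := Real.exp_le_exp.mpr hE
        _ = Real.exp (-α * r) * Real.exp α * Real.exp (-(k * (t - d)^2)) := by
            rw [Real.exp_add, Real.exp_add]
    have hpre : t ^ (-(3:ℝ)/2) * (r + t) ≤ a ^ (-(3:ℝ)/2) * (r + b) := by
      apply mul_le_mul _ (by linarith) (by linarith) (by positivity)
      exact Real.rpow_le_rpow_of_nonpos ha0 hta (by norm_num)
    have hrt0 : (0:ℝ) ≤ t ^ (-(3:ℝ)/2) * (r + t) := by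
      have := (Real.rpow_pos_of_pos ht0 (-(3:ℝ)/2)).le
      nlinarith
    calc t ^ (-(3:ℝ)/2) * (r + t) * Real.exp (-r ^ 2 / (4 * t) - α ^ 2 * t + ε * r / t)
        ≤ t ^ (-(3:ℝ)/2) * (r + t) *
            (Real.exp (-α * r) * Real.exp α * Real.exp (-(k * (t - d)^2))) :=
          mul_le_mul_of_nonneg_left hexpE hrt0
      _ ≤ a ^ (-(3:ℝ)/2) * (r + b) *
            (Real.exp (-α * r) * Real.exp α * Real.exp (-(k * (t - d)^2))) := by
          apply mul_le_mul_of_nonneg_right hpre (by positivity)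
      _ = M * Real.exp (-(k * (t - d)^2)) := by rw [hM_def]; ring
  have hInt : Integrable (fun t : ℝ => M * Real.exp (-(k * (t - d)^2))) := by
    have h1 : Integrable (fun x : ℝ => Real.exp (-k * x^2)) := integrable_exp_neg_mul_sq hk0
    have h2 := (h1.comp_sub_right d).const_mul M
    simpa [neg_mul] using h2
  calc ∫⁻ t in Ioc a b,
        ENNReal.ofReal (t ^ (-(3:ℝ)/2) * (r + t) *
          Real.exp (-r ^ 2 / (4 * t) - α ^ 2 * t + ε * r / t))
      ≤ ∫⁻ t in Ioc a b, ENNReal.ofReal (M * Real.exp (-(k * (t - d)^2))) := by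
        apply setLIntegral_mono _ hpt
        exact (measurable_const.mul
          ((Real.measurable_exp.comp (((measurable_id.sub_const d).pow_const 2
            |>.const_mul k).neg)))).ennreal_ofReal
    _ ≤ ∫⁻ t, ENNReal.ofReal (M * Real.exp (-(k * (t - d)^2))) :=
        setLIntegral_le_lintegral _ _
    _ = ENNReal.ofReal (∫ t, M * Real.exp (-(k * (t - d)^2))) :=
        (ofReal_integral_eq_lintegral_ofReal hInt
          (Filter.Eventually.of_forall (fun t => by positivity))).symm
    _ ≤ ENNReal.ofReal ((Real.exp α * ((8*α) ^ ((3:ℝ)/2) * (1 + 1/α) *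
          Real.sqrt (Real.pi / α^3))) * Real.exp (-α * r)) := by
        apply ENNReal.ofReal_le_ofReal
        rw [integral_const_mul]
        have hg : ∫ t : ℝ, Real.exp (-(k * (t - d)^2)) = Real.sqrt (Real.pi / k) := by
          have h3 := integral_sub_right_eq_self (μ := volume)
            (fun x : ℝ => Real.exp (-(k * x^2))) d
          rw [h3]
          simpa [neg_mul] using integral_gaussian k
        rw [hg]
        set u : ℝ := r ^ ((1:ℝ)/2) with hu_def
        have hu0 : 0 < u := Real.rpow_pos_of_pos hr0 _
        have hu2 : u ^ 2 = r := by
          rw [hu_def, ← Real.rpow_natCast (r ^ ((1:ℝ)/2)) 2, ← Real.rpow_mul hr0.le]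
          norm_num
        have hu3 : r ^ ((3:ℝ)/2) = u ^ 3 := by
          rw [hu_def, ← Real.rpow_natCast (r ^ ((1:ℝ)/2)) 3, ← Real.rpow_mul hr0.le]
          norm_num
        have ha32 : a ^ (-(3:ℝ)/2) = (8*α) ^ ((3:ℝ)/2) / u ^ 3 := by
          rw [ha_def, show (-(3:ℝ)/2) = -((3:ℝ)/2) by norm_num,
            Real.rpow_neg (by positivity), Real.div_rpow hr0.le (by positivity), hu3]
          rw [inv_div]
        have hsqrt : Real.sqrt (Real.pi / k) = Real.sqrt (Real.pi / α^3) * u := by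
          rw [hk_def, show Real.pi / (α^3 / r) = (Real.pi / α^3) * r by field_simp,
            Real.sqrt_mul (by positivity), hu_def]
          rw [Real.sqrt_eq_rpow r]
        have hrb : r + b = (1 + 1/α) * r := by
          rw [hb_def]; field_simp
        rw [hM_def, ha32, hsqrt, hrb]
        rw [← hu2]
        have hune : u ≠ 0 := hu0.ne'
        apply le_of_eq
        field_simp

lemma aux_exp_neg_le' {x : ℝ} (hx : 0 < x) : Real.exp (-x) ≤ 4 / x ^ 2 := by
  have h1 : x / 2 ≤ Real.exp (x / 2) := by
    have := Real.add_one_le_exp (x / 2); linarith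
  have h2 : x ^ 2 / 4 ≤ Real.exp x := by
    have hm := mul_le_mul h1 h1 (by linarith) (Real.exp_nonneg _)
    rw [← Real.exp_add] at hm
    have hxx : x / 2 + x / 2 = x := by ring
    rw [hxx] at hm
    nlinarith
  rw [Real.exp_neg]
  have hx2 : (0:ℝ) < x ^ 2 / 4 := by positivity
  calc (Real.exp x)⁻¹ ≤ (x ^ 2 / 4)⁻¹ := inv_anti₀ hx2 h2
    _ = 4 / x ^ 2 := by field_simp

lemma piece3 (ε α r : ℝ) (hε₀ : 0 < ε) (hε₁ : ε < 1 / 8) (hα : 0 < α) (hr : 1 < r) :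
    ∫⁻ t in Ioi (r/α),
        ENNReal.ofReal (t ^ (-(3:ℝ)/2) * (r + t) *
          Real.exp (-r ^ 2 / (4 * t) - α ^ 2 * t + ε * r / t)) ≤
      ENNReal.ofReal ((Real.exp α * (1+α) * (64/α^4) * ((2/3) * α ^ ((3:ℝ)/2)))
        * Real.exp (-α * r)) := by
  have hr0 : (0:ℝ) < r := by linarith
  set b : ℝ := r / α with hb_def
  have hb0 : 0 < b := by positivity
  set D : ℝ := Real.exp α * (1+α) * (64/α^4) with hD_def
  have hD0 : 0 ≤ D := by positivity
  have hpt : ∀ t ∈ Ioi b,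
      ENNReal.ofReal (t ^ (-(3:ℝ)/2) * (r + t) *
          Real.exp (-r ^ 2 / (4 * t) - α ^ 2 * t + ε * r / t)) ≤
      ENNReal.ofReal (Real.exp (-α * r) * D * t ^ (-(5:ℝ)/2)) := by
    intro t ht
    have hbt : b < t := ht
    have ht0 : 0 < t := lt_trans hb0 hbt
    apply ENNReal.ofReal_le_ofReal
    have hrat : r < α * t := by
      have hbb : α * b = r := by rw [hb_def]; field_simp
      nlinarith [mul_lt_mul_of_pos_left hbt hα]
    have step1 : ε * r / t ≤ α := by
      rw [div_le_iff₀ ht0]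
      nlinarith
    have step2 : -r ^ 2 / (4 * t) - α ^ 2 * t ≤ -α * r + -(α^2 * t / 4) := by
      have hdiff : (-α * r + -(α^2 * t / 4)) - (-r ^ 2 / (4 * t) - α ^ 2 * t)
          = (3*α*t - r) * (α*t - r) / (4*t) := by field_simp; ring
      have hnum : 0 ≤ (3*α*t - r) * (α*t - r) / (4*t) := by
        apply div_nonneg (mul_nonneg (by nlinarith) (by linarith)) (by positivity)
      linarith [hdiff ▸ hnum]
    have hE : -r ^ 2 / (4 * t) - α ^ 2 * t + ε * r / t
        ≤ (-α * r + α) + -(α^2 * t / 4) := by linarith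
    have hx : (0:ℝ) < α^2 * t / 4 := by positivity
    have hexpE : Real.exp (-r ^ 2 / (4 * t) - α ^ 2 * t + ε * r / t)
        ≤ Real.exp (-α * r) * Real.exp α * (64 / (α^4 * t^2)) := by
      calc Real.exp (-r ^ 2 / (4 * t) - α ^ 2 * t + ε * r / t)
          ≤ Real.exp ((-α * r + α) + -(α^2 * t / 4)) := Real.exp_le_exp.mpr hE
        _ = Real.exp (-α * r) * Real.exp α * Real.exp (-(α^2 * t / 4)) := by
            rw [Real.exp_add, Real.exp_add]
        _ ≤ Real.exp (-α * r) * Real.exp α * (64 / (α^4 * t^2)) := by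
            apply mul_le_mul_of_nonneg_left _ (by positivity)
            calc Real.exp (-(α^2 * t / 4)) ≤ 4 / (α^2 * t / 4)^2 := aux_exp_neg_le' hx
              _ = 64 / (α^4 * t^2) := by field_simp; ring
    have hrt0 : (0:ℝ) ≤ t ^ (-(3:ℝ)/2) * (r + t) := by
      have := (Real.rpow_pos_of_pos ht0 (-(3:ℝ)/2)).le
      nlinarith
    have e1 : t ^ (-(3:ℝ)/2) * t = t ^ (-(1:ℝ)/2) := by
      nth_rewrite 2 [← Real.rpow_one t]
      rw [← Real.rpow_add ht0]; norm_num
    have e2 : t ^ (-(5:ℝ)/2) * t ^ 2 = t ^ (-(1:ℝ)/2) := by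
      rw [← Real.rpow_natCast t 2, ← Real.rpow_add ht0]; norm_num
    have hpow : t ^ (-(3:ℝ)/2) * t / t^2 = t ^ (-(5:ℝ)/2) := by
      rw [div_eq_iff (by positivity : (t:ℝ)^2 ≠ 0)]
      exact e1.trans e2.symm
    calc t ^ (-(3:ℝ)/2) * (r + t) * Real.exp (-r ^ 2 / (4 * t) - α ^ 2 * t + ε * r / t)
        ≤ t ^ (-(3:ℝ)/2) * (r + t) *
            (Real.exp (-α * r) * Real.exp α * (64 / (α^4 * t^2))) :=
          mul_le_mul_of_nonneg_left hexpE hrt0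
      _ ≤ t ^ (-(3:ℝ)/2) * ((1+α) * t) *
            (Real.exp (-α * r) * Real.exp α * (64 / (α^4 * t^2))) := by
          apply mul_le_mul_of_nonneg_right _ (by positivity)
          apply mul_le_mul_of_nonneg_left (by nlinarith) (Real.rpow_pos_of_pos ht0 _).le
      _ = Real.exp (-α * r) * D * (t ^ (-(3:ℝ)/2) * t / t^2) := by
          rw [hD_def]; ring
      _ = Real.exp (-α * r) * D * t ^ (-(5:ℝ)/2) := by rw [hpow]
  have hIntOn : IntegrableOn (fun t : ℝ => Real.exp (-α * r) * D * t ^ (-(5:ℝ)/2)) (Ioi b) := by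
    exact (integrableOn_Ioi_rpow_of_lt (by norm_num) hb0).const_mul _
  calc ∫⁻ t in Ioi b,
        ENNReal.ofReal (t ^ (-(3:ℝ)/2) * (r + t) *
          Real.exp (-r ^ 2 / (4 * t) - α ^ 2 * t + ε * r / t))
      ≤ ∫⁻ t in Ioi b, ENNReal.ofReal (Real.exp (-α * r) * D * t ^ (-(5:ℝ)/2)) := by
        apply setLIntegral_mono _ hpt
        fun_prop
    _ = ENNReal.ofReal (∫ t in Ioi b, Real.exp (-α * r) * D * t ^ (-(5:ℝ)/2)) := by
        refine (ofReal_integral_eq_lintegral_ofReal hIntOn ?_).symm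
        rw [Filter.EventuallyLE, ae_restrict_iff' measurableSet_Ioi]
        refine Filter.Eventually.of_forall fun t ht => ?_
        have ht0 : 0 < t := lt_trans hb0 ht
        simp only [Pi.zero_apply]
        positivity
    _ ≤ ENNReal.ofReal ((Real.exp α * (1+α) * (64/α^4) * ((2/3) * α ^ ((3:ℝ)/2)))
          * Real.exp (-α * r)) := by
        apply ENNReal.ofReal_le_ofReal
        rw [integral_const_mul, integral_Ioi_rpow_of_lt (by norm_num) hb0]
        have hval : -b ^ (-(5:ℝ)/2 + 1) / (-(5:ℝ)/2 + 1) = (2/3) * b ^ (-(3:ℝ)/2) := by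
          norm_num
          ring
        rw [hval]
        have hble : b ^ (-(3:ℝ)/2) ≤ α ^ ((3:ℝ)/2) := by
          have h1 : (1/α : ℝ) ≤ b := by
            rw [hb_def]
            apply div_le_div_of_nonneg_right (by linarith) hα.le
          have h2 : b ^ (-(3:ℝ)/2) ≤ (1/α) ^ (-(3:ℝ)/2) :=
            Real.rpow_le_rpow_of_nonpos (by positivity) h1 (by norm_num)
          have h3 : (1/α : ℝ) ^ (-(3:ℝ)/2) = α ^ ((3:ℝ)/2) := by
            rw [one_div, Real.inv_rpow hα.le, show (-(3:ℝ)/2) = -((3:ℝ)/2) by norm_num,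
              Real.rpow_neg hα.le, inv_inv]
          linarith [h3 ▸ h2]
        rw [hD_def]
        have he : (0:ℝ) ≤ Real.exp (-α*r) * (Real.exp α * (1+α) * (64/α^4)) * (2/3) := by
          positivity
        nlinarith [Real.exp_nonneg (-α*r), Real.exp_nonneg α,
          mul_le_mul_of_nonneg_left hble he]

/-- For `ε ∈ (0,1/8)` and `α > 0` there is `C_ε` with
`∫₀^∞ t^{-3/2}(r+t) exp(−r²/(4t) − α²t + εr/t) dt ≤ C_ε e^{−αr}` for all `r > 1`. -/
theorem stmt17 (ε α : ℝ) (hε₀ : 0 < ε) (hε₁ : ε < 1 / 8) (hα : 0 < α) :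
    ∃ C : ℝ, ∀ r : ℝ, 1 < r →
      ∫⁻ t in Ioi (0:ℝ),
          ENNReal.ofReal (t ^ (-(3:ℝ)/2) * (r + t) *
            Real.exp (-r ^ 2 / (4 * t) - α ^ 2 * t + ε * r / t)) ≤
        ENNReal.ofReal (C * Real.exp (-α * r)) := by
  refine ⟨16384 * (1 + 1/(8*α))^2 / (8*α)
      + Real.exp α * ((8*α) ^ ((3:ℝ)/2) * (1 + 1/α) * Real.sqrt (Real.pi / α^3))
      + Real.exp α * (1+α) * (64/α^4) * ((2/3) * α ^ ((3:ℝ)/2)), fun r hr => ?_⟩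
  have hr0 : (0:ℝ) < r := by linarith
  have ha0 : (0:ℝ) < r/(8*α) := by positivity
  have hb0 : (0:ℝ) < r/α := by positivity
  have hab : r/(8*α) ≤ r/α :=
    div_le_div_of_nonneg_left hr0.le hα (by linarith)
  have h1 : Ioc (0:ℝ) (r/(8*α)) ∪ Ioc (r/(8*α)) (r/α) = Ioc 0 (r/α) :=
    Ioc_union_Ioc_eq_Ioc ha0.le hab
  have h2 : Ioc (0:ℝ) (r/α) ∪ Ioi (r/α) = Ioi 0 :=
    Ioc_union_Ioi_eq_Ioi hb0.le
  set f : ℝ → ENNReal := fun t => ENNReal.ofReal (t ^ (-(3:ℝ)/2) * (r + t) *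
    Real.exp (-r ^ 2 / (4 * t) - α ^ 2 * t + ε * r / t)) with hf_def
  have hK1 : (0:ℝ) ≤ 16384 * (1 + 1/(8*α))^2 / (8*α) * Real.exp (-α * r) := by positivity
  have hK2 : (0:ℝ) ≤ Real.exp α * ((8*α) ^ ((3:ℝ)/2) * (1 + 1/α) *
      Real.sqrt (Real.pi / α^3)) * Real.exp (-α * r) := by positivity
  calc ∫⁻ t in Ioi (0:ℝ), f t
      = ∫⁻ t in (Ioc (0:ℝ) (r/(8*α)) ∪ Ioc (r/(8*α)) (r/α)) ∪ Ioi (r/α), f t := by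
        rw [h1, h2]
    _ ≤ (∫⁻ t in Ioc (0:ℝ) (r/(8*α)), f t) + (∫⁻ t in Ioc (r/(8*α)) (r/α), f t)
          + ∫⁻ t in Ioi (r/α), f t :=
        le_trans (lintegral_union_le _ _ _)
          (add_le_add_left (lintegral_union_le _ _ _) _)
    _ ≤ ENNReal.ofReal ((16384 * (1 + 1/(8*α))^2 / (8*α)) * Real.exp (-α * r))
          + ENNReal.ofReal ((Real.exp α * ((8*α) ^ ((3:ℝ)/2) * (1 + 1/α) *
              Real.sqrt (Real.pi / α^3))) * Real.exp (-α * r))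
          + ENNReal.ofReal ((Real.exp α * (1+α) * (64/α^4) * ((2/3) * α ^ ((3:ℝ)/2)))
              * Real.exp (-α * r)) :=
        add_le_add (add_le_add (piece1 ε α r hε₀ hε₁ hα hr) (piece2 ε α r hε₀ hε₁ hα hr))
          (piece3 ε α r hε₀ hε₁ hα hr)
    _ = ENNReal.ofReal ((16384 * (1 + 1/(8*α))^2 / (8*α)
          + Real.exp α * ((8*α) ^ ((3:ℝ)/2) * (1 + 1/α) * Real.sqrt (Real.pi / α^3))
          + Real.exp α * (1+α) * (64/α^4) * ((2/3) * α ^ ((3:ℝ)/2)))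
            * Real.exp (-α * r)) := by
        rw [← ENNReal.ofReal_add hK1 hK2, ← ENNReal.ofReal_add (by positivity) (by positivity)]
        congr 1
        ring
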